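/- In the setup Σ = Σ_W + M D_π Mᵀ (Σ_W symmetric positive definite, D_π diagonal positive) with B = Σ⁻¹ M D_π and columns B_ℓ = B e_ℓ, μ_ℓ = M e_ℓ, one has for every ℓ: B_ℓᵀ Σ_W B_ℓ ≤ B_ℓᵀ Σ B_ℓ = π_ℓ² μ_ℓᵀ Σ⁻¹ μ_ℓ ≤ π_ℓ. -/

import Mathlib

open Matrix

theorem stmt_7 {p L : ℕ} (Sw : Matrix (Fin p) (Fin p) ℝ) (M : Matrix (Fin p) (Fin L) ℝ)
    (π : Fin L → ℝ) (hπ : ∀ ℓ, 0 < π ℓ) (hSw : Sw.PosDef) :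
    let S := Sw + M * Matrix.diagonal π * Mᵀ
    let B := S⁻¹ * M * Matrix.diagonal π
    ∀ ℓ : Fin L,
      (fun i => B i ℓ) ⬝ᵥ Sw *ᵥ (fun i => B i ℓ) ≤ (fun i => B i ℓ) ⬝ᵥ S *ᵥ (fun i => B i ℓ) ∧
      (fun i => B i ℓ) ⬝ᵥ S *ᵥ (fun i => B i ℓ) =
        (π ℓ) ^ 2 * ((fun i => M i ℓ) ⬝ᵥ S⁻¹ *ᵥ (fun i => M i ℓ)) ∧
      (π ℓ) ^ 2 * ((fun i => M i ℓ) ⬝ᵥ S⁻¹ *ᵥ (fun i => M i ℓ)) ≤ π ℓ := by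
  intro S B ℓ
  have hD : (Matrix.diagonal π).PosSemidef :=
    Matrix.posSemidef_diagonal_iff.mpr fun i => (hπ i).le
  have hMDM : (M * Matrix.diagonal π * Mᵀ).PosSemidef := by
    simpa using hD.mul_mul_conjTranspose_same M
  have hS : S.PosDef := hSw.add_posSemidef hMDM
  have hSinv : (S⁻¹).PosDef := hS.inv
  set μ : Fin p → ℝ := fun i => M i ℓ with hμ
  set y : Fin p → ℝ := S⁻¹ *ᵥ μ with hy
  set t : ℝ := μ ⬝ᵥ y with htdef
  -- the column of B
  have hB : (fun i => B i ℓ) = π ℓ • y := by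
    funext i
    simp only [B, Matrix.mul_apply, Matrix.diagonal_apply, hy, mulVec, dotProduct,
      Pi.smul_apply, smul_eq_mul]
    rw [Finset.sum_eq_single ℓ]
    · simp only [if_pos rfl, Finset.mul_sum, Finset.sum_mul]
      exact Finset.sum_congr rfl fun k _ => by simp [hμ]; ring
    · intro b _ hb; simp [hb]
    · simp
  have hSy : S *ᵥ y = μ := by
    rw [hy, mulVec_mulVec, Matrix.mul_nonsing_inv _ (hS.det_pos.ne'.isUnit), one_mulVec]
  have ht0 : 0 ≤ t := by
    have := hSinv.posSemidef.dotProduct_mulVec_nonneg μ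
    simpa [htdef, hy] using this
  have hyμ : y ⬝ᵥ μ = t := by rw [htdef, dotProduct_comm]
  -- quadratic form of the M D Mᵀ part at y
  have hquad : π ℓ * t ^ 2 ≤ y ⬝ᵥ (M * Matrix.diagonal π * Mᵀ) *ᵥ y := by
    have hrw : y ⬝ᵥ (M * Matrix.diagonal π * Mᵀ) *ᵥ y
        = ∑ k, π k * ((Mᵀ *ᵥ y) k) ^ 2 := by
      rw [← mulVec_mulVec, ← mulVec_mulVec, dotProduct_mulVec, ← mulVec_transpose]
      simp [dotProduct, mulVec_diagonal, sq]
      congr 1; funext k; ring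
    have hℓ : (Mᵀ *ᵥ y) ℓ = t := by
      simp [mulVec, dotProduct, htdef, transpose_apply, hμ]
    rw [hrw]
    calc π ℓ * t ^ 2 = π ℓ * ((Mᵀ *ᵥ y) ℓ) ^ 2 := by rw [hℓ]
      _ ≤ ∑ k, π k * ((Mᵀ *ᵥ y) k) ^ 2 :=
        Finset.single_le_sum (f := fun k => π k * ((Mᵀ *ᵥ y) k) ^ 2)
          (fun k _ => mul_nonneg (hπ k).le (sq_nonneg _)) (Finset.mem_univ ℓ)
  -- t ≥ π ℓ * t ^ 2
  have hqt : π ℓ * t ^ 2 ≤ t := by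
    have h1 : y ⬝ᵥ S *ᵥ y = t := by rw [hSy, hyμ]
    have h2 : 0 ≤ y ⬝ᵥ Sw *ᵥ y := by simpa using hSw.posSemidef.dotProduct_mulVec_nonneg y
    have h3 : y ⬝ᵥ S *ᵥ y = y ⬝ᵥ Sw *ᵥ y + y ⬝ᵥ (M * Matrix.diagonal π * Mᵀ) *ᵥ y := by
      simp [S, add_mulVec, dotProduct_add]
    nlinarith [hquad]
  refine ⟨?_, ?_, ?_⟩
  · rw [hB]
    have h3 : (π ℓ • y) ⬝ᵥ S *ᵥ (π ℓ • y)
        = (π ℓ • y) ⬝ᵥ Sw *ᵥ (π ℓ • y)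
          + (π ℓ • y) ⬝ᵥ (M * Matrix.diagonal π * Mᵀ) *ᵥ (π ℓ • y) := by
      simp [S, add_mulVec, dotProduct_add]
    have h4 : 0 ≤ (π ℓ • y) ⬝ᵥ (M * Matrix.diagonal π * Mᵀ) *ᵥ (π ℓ • y) := by
      simpa using hMDM.dotProduct_mulVec_nonneg (π ℓ • y)
    linarith [h3, h4]
  · rw [hB]
    have : (π ℓ • y) ⬝ᵥ S *ᵥ (π ℓ • y) = π ℓ ^ 2 * (y ⬝ᵥ μ) := by
      rw [mulVec_smul, hSy, dotProduct_smul, smul_dotProduct]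
      simp [smul_eq_mul]; ring
    rw [this, hyμ]
  · show π ℓ ^ 2 * t ≤ π ℓ
    nlinarith [mul_le_mul_of_nonneg_left hqt (hπ ℓ).le, sq_nonneg (π ℓ * t - 1), hπ ℓ, ht0]
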